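/- Let n, s_1, s_2 be natural numbers with s_1 ≥ 1, s_2 ≥ 1, s := s_1 + s_2 < n, and s dividing n. Let S_1 and S_2 be disjoint subsets of Fin n with |S_1| = s_1 and |S_2| = s_2, and fix i ∈ {1, 2}. Let ε ∈ (0, 1) and let t be a natural number with t ≥ (e^5 / (4π²)) · ln(1/ε) · (s / s_i). If T_1, …, T_t are independent random subsets, each uniformly distributed over the size-(n/s) subsets of Fin n, then with probability at least 1 − ε there exists a trial j ∈ {1, …, t} such that |T_j ∩ S_i| = 1 and T_j ∩ S_{3−i} = ∅. -/

import Mathlib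

open Finset Real

/-- step lemma: one step of the choose ratio bound -/
lemma stmt14_step (σ k a : ℕ) (hσ : 2 ≤ σ) (hk : 1 ≤ k) (ha : σ * k ≤ a) :
    (a.choose k : ℝ) ≤ ((σ : ℝ) / (σ - 1)) * ((a - 1).choose k) := by
  have ha1 : 1 ≤ a := le_trans (by nlinarith) ha
  have hid := Nat.choose_mul_succ_eq (a - 1) k
  rw [Nat.sub_add_cancel ha1] at hid
  have hka : k ≤ a := le_trans (by nlinarith) ha
  have hid' : ((a - 1).choose k : ℝ) * a = (a.choose k : ℝ) * ((a : ℝ) - k) := by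
    have := congrArg (Nat.cast (R := ℝ)) hid
    push_cast [Nat.cast_sub hka] at this
    linarith [this]
  have hσ1 : (1 : ℝ) ≤ (σ : ℝ) - 1 := by
    have : (2 : ℝ) ≤ (σ : ℝ) := by exact_mod_cast hσ
    linarith
  have hak : (1 : ℝ) ≤ (a : ℝ) - k := by
    have h1 : σ * k ≤ a := ha
    have : (σ : ℝ) * k ≤ a := by exact_mod_cast h1
    have hk' : (1 : ℝ) ≤ (k : ℝ) := by exact_mod_cast hk
    nlinarith
  rw [div_mul_eq_mul_div, le_div_iff₀ (by linarith)]
  -- (a.choose k) * (σ - 1) ≤ σ * (a-1).choose k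
  have hc : (0 : ℝ) ≤ (a.choose k : ℝ) := by positivity
  -- (σ-1) * a ≤ σ * (a - k)  ⟺ σ k ≤ a
  have hkey : ((σ : ℝ) - 1) * a ≤ (σ : ℝ) * ((a : ℝ) - k) := by
    have : (σ : ℝ) * k ≤ a := by exact_mod_cast ha
    nlinarith
  nlinarith [hid']

lemma stmt14_iter (σ m n : ℕ) (hσ : 2 ≤ σ) (hm : 2 ≤ m) (hn : n = σ * m) :
    ∀ j, j ≤ σ - 1 →
      ((n - 1).choose (m - 1) : ℝ) ≤ ((σ : ℝ) / (σ - 1)) ^ j * ((n - 1 - j).choose (m - 1)) := by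
  intro j
  induction j with
  | zero => intro _; norm_num
  | succ j ih =>
    intro hj
    have hj' : j ≤ σ - 1 := le_trans (Nat.le_succ j) hj
    refine le_trans (ih hj') ?_
    rw [pow_succ, mul_assoc]
    have hb : (0 : ℝ) ≤ ((σ : ℝ) / (σ - 1)) ^ j := by
      have h2R : (2 : ℝ) ≤ (σ : ℝ) := by exact_mod_cast hσ
      exact pow_nonneg (div_nonneg (by linarith) (by linarith)) j
    refine mul_le_mul_of_nonneg_left ?_ hb
    have hmul : σ * (m - 1) + σ = n := by
      rw [hn]
      have hm1 : m - 1 + 1 = m := by omega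
      calc σ * (m - 1) + σ = σ * ((m - 1) + 1) := by ring
        _ = σ * m := by rw [hm1]
    have := stmt14_step σ (m - 1) (n - 1 - j) hσ (by omega) (by omega)
    have heq : n - 1 - j - 1 = n - 1 - (j + 1) := by omega
    rw [heq] at this
    exact this

lemma stmt14_pow_le_e (σ : ℕ) (hσ : 2 ≤ σ) :
    ((σ : ℝ) / (σ - 1)) ^ (σ - 1) ≤ Real.exp 1 := by
  have hσR : (2 : ℝ) ≤ (σ : ℝ) := by exact_mod_cast hσ
  have h1 : (σ : ℝ) / (σ - 1) = 1 + 1 / ((σ : ℝ) - 1) := by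
    have hne : (σ:ℝ) - 1 ≠ 0 := by linarith
    field_simp
    ring
  have h2 : (σ : ℝ) / (σ - 1) ≤ Real.exp (1 / ((σ : ℝ) - 1)) := by
    rw [h1]
    have := Real.add_one_le_exp (1 / ((σ : ℝ) - 1))
    linarith
  have h3 : ((σ : ℝ) / (σ - 1)) ^ (σ - 1) ≤ (Real.exp (1 / ((σ : ℝ) - 1))) ^ (σ - 1) := by
    exact pow_le_pow_left₀ (div_nonneg (by linarith) (by linarith)) h2 _
  refine le_trans h3 ?_
  rw [← Real.exp_nat_mul]
  have hcast : ((σ - 1 : ℕ) : ℝ) = (σ : ℝ) - 1 := by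
    push_cast [Nat.cast_sub (by omega : 1 ≤ σ)]; ring
  rw [hcast]
  rw [mul_one_div, div_self (by linarith : (σ:ℝ) - 1 ≠ 0)]

/-- main combinatorial bound : C(n, m) ≤ e σ C(n-σ, m-1) for n = σ m -/
lemma stmt14_choose_bound (σ m n : ℕ) (hσ : 2 ≤ σ) (hm : 2 ≤ m) (hn : n = σ * m) :
    (n.choose m : ℝ) ≤ Real.exp 1 * σ * ((n - σ).choose (m - 1)) := by
  -- first: n.choose m * m = n * (n-1).choose (m-1)
  have hn4 : 4 ≤ n := hn ▸ Nat.mul_le_mul hσ hm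
  have hn1 : n - 1 + 1 = n := by omega
  have hm1 : m - 1 + 1 = m := by omega
  have hid : n * ((n - 1).choose (m - 1)) = n.choose m * m := by
    have h0 := Nat.add_one_mul_choose_eq (n - 1) (m - 1)
    simpa [Nat.succ_eq_add_one, hn1, hm1] using h0
  have hfirst : (n.choose m : ℝ) = (σ : ℝ) * ((n - 1).choose (m - 1)) := by
    have hmpos : (0 : ℝ) < (m : ℝ) := by
      have : (2:ℝ) ≤ (m:ℝ) := by exact_mod_cast hm
      linarith
    have hc : ((n : ℝ)) * ((n - 1).choose (m - 1) : ℝ) = (n.choose m : ℝ) * m := by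
      exact_mod_cast congrArg (Nat.cast (R := ℝ)) hid
    have hnR : (n : ℝ) = (σ : ℝ) * m := by exact_mod_cast hn
    apply mul_right_cancel₀ (ne_of_gt hmpos)
    rw [← hc, hnR]; ring
  have hiter := stmt14_iter σ m n hσ hm hn (σ - 1) le_rfl
  have heq : n - 1 - (σ - 1) = n - σ := by omega
  rw [heq] at hiter
  have hpow := stmt14_pow_le_e σ hσ
  have hC : (0 : ℝ) ≤ ((n - σ).choose (m - 1) : ℝ) := by positivity
  have hσ0 : (0 : ℝ) ≤ (σ : ℝ) := by positivity
  rw [hfirst]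
  calc (σ : ℝ) * ((n - 1).choose (m - 1))
      ≤ (σ : ℝ) * (((σ : ℝ) / (σ - 1)) ^ (σ - 1) * ((n - σ).choose (m - 1))) :=
        mul_le_mul_of_nonneg_left hiter hσ0
    _ ≤ (σ : ℝ) * (Real.exp 1 * ((n - σ).choose (m - 1))) := by
        apply mul_le_mul_of_nonneg_left _ hσ0
        exact mul_le_mul_of_nonneg_right hpow hC
    _ = Real.exp 1 * σ * ((n - σ).choose (m - 1)) := by ring

/-- tuple counting -/
lemma stmt14_tuples {Ω : Type*} [Fintype Ω] [DecidableEq Ω] (t : ℕ) (p : Ω → Prop)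
    [DecidablePred p] :
    (Finset.univ.filter fun f : Fin t → Ω => ∀ j, p (f j)).card =
      (Finset.univ.filter p).card ^ t := by
  have h : (Finset.univ.filter fun f : Fin t → Ω => ∀ j, p (f j)) =
      Fintype.piFinset (fun _ : Fin t => Finset.univ.filter p) := by
    ext f; simp [Fintype.mem_piFinset]
  rw [h, Fintype.card_piFinset]
  simp

set_option maxHeartbeats 1000000

/-- Random sampling lemma for ConcGT: with `S 0, S 1` disjoint subsets of `Fin n` of sizes
`s 0 ≥ 1`, `s 1 ≥ 1`, `s = s 0 + s 1 < n` dividing `n`, and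
`t ≥ (e⁵/(4π²)) · ln(1/ε) · (s / s i)` independent uniform draws of size-`(n/s)` subsets
(modeled by the uniform distribution on tuples of size-`(n/s)` subsets), with probability at
least `1 − ε` some trial contains exactly one item of `S i` and no item of the other set. -/
theorem stmt14 (n : ℕ) (s : Fin 2 → ℕ) (hs : ∀ i, 1 ≤ s i)
    (hlt : s 0 + s 1 < n) (hdvd : (s 0 + s 1) ∣ n)
    (S : Fin 2 → Finset (Fin n)) (hdisj : Disjoint (S 0) (S 1))
    (hcard : ∀ i, (S i).card = s i)
    (i : Fin 2) (ε : ℝ) (hε0 : 0 < ε) (hε1 : ε < 1)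
    (t : ℕ)
    (ht : Real.exp 5 / (4 * Real.pi ^ 2) * Real.log (1 / ε) *
            ((s 0 + s 1 : ℕ) / (s i : ℕ) : ℝ) ≤ (t : ℝ)) :
    1 - ε ≤
      ((Finset.univ.filter
          (fun f : Fin t → {T : Finset (Fin n) // T.card = n / (s 0 + s 1)} =>
            ∃ j : Fin t, ((f j : Finset (Fin n)) ∩ S i).card = 1 ∧
              (f j : Finset (Fin n)) ∩ S (i + 1) = ∅)).card : ℝ) /
        ((Finset.univ : Finset (Fin t → {T : Finset (Fin n) // T.card = n / (s 0 + s 1)})).card : ℝ) := by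
  set σ := s 0 + s 1 with hσdef
  have hσ2 : 2 ≤ σ := by have := hs 0; have := hs 1; omega
  set m := n / σ with hmdef
  have hnσ : n = σ * m := (Nat.mul_div_cancel' hdvd).symm
  have hm2 : 2 ≤ m := by
    rcases Nat.lt_or_ge m 2 with h | h
    · interval_cases m <;> omega
    · exact h
  -- basic set facts
  have hii : S i ∪ S (i + 1) = S 0 ∪ S 1 := by
    fin_cases i
    · rfl
    · exact Finset.union_comm _ _
  have hdd : Disjoint (S i) (S (i + 1)) := by
    fin_cases i
    exacts [hdisj, hdisj.symm]
  have hsubi : S i ⊆ S 0 ∪ S 1 := hii ▸ Finset.subset_union_left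
  have hsubi1 : S (i + 1) ⊆ S 0 ∪ S 1 := hii ▸ Finset.subset_union_right
  set U : Finset (Fin n) := S 0 ∪ S 1 with hUdef
  have hU : U.card = σ := by
    rw [hUdef, Finset.card_union_of_disjoint hdisj, hcard, hcard]
  set R : Finset (Fin n) := Finset.univ \ U with hRdef
  have hR : R.card = n - σ := by
    rw [hRdef, Finset.card_sdiff_of_subset (Finset.subset_univ U), Finset.card_univ,
      Fintype.card_fin, hU]
  -- the plain-finset good-set
  set G2 : Finset (Finset (Fin n)) := Finset.univ.filter
      (fun T => T.card = m ∧ (T ∩ S i).card = 1 ∧ T ∩ S (i + 1) = ∅) with hG2def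
  -- injection lower bound on G2
  set D : Finset (Fin n × Finset (Fin n)) := (S i) ×ˢ (Finset.powersetCard (m - 1) R)
    with hDdef
  have hD : D.card = s i * (n - σ).choose (m - 1) := by
    rw [hDdef, Finset.card_product, hcard, Finset.card_powersetCard, hR]
  have hinj : D.card ≤ G2.card := by
    apply Finset.card_le_card_of_injOn (fun q => insert q.1 q.2)
    · rintro ⟨x, A⟩ hq
      rw [hDdef, Finset.mem_coe, Finset.mem_product] at hq
      obtain ⟨hx, hA⟩ := hq
      rw [Finset.mem_powersetCard] at hA
      obtain ⟨hAR, hAcard⟩ := hA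
      have hAU : ∀ y ∈ A, y ∉ U := by
        intro y hy
        have := hAR hy
        rw [hRdef, Finset.mem_sdiff] at this
        exact this.2
      have hxA : x ∉ A := fun h => hAU x h (hsubi hx)
      have hcardins : (insert x A).card = m := by
        rw [Finset.card_insert_of_notMem hxA, hAcard]
        omega
      have hint1 : (insert x A) ∩ S i = {x} := by
        ext y
        simp only [Finset.mem_inter, Finset.mem_insert, Finset.mem_singleton]
        constructor
        · rintro ⟨hy1 | hy1, hy2⟩
          · exact hy1
          · exact absurd (hsubi hy2) (hAU y hy1)
        · rintro rfl
          exact ⟨Or.inl rfl, hx⟩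
      have hint2 : (insert x A) ∩ S (i + 1) = ∅ := by
        ext y
        simp only [Finset.mem_inter, Finset.mem_insert, Finset.notMem_empty, iff_false,
          not_and]
        rintro (rfl | hy1)
        · exact fun h => (Finset.disjoint_left.mp hdd) hx h
        · exact fun h => hAU y hy1 (hsubi1 h)
      rw [hG2def, Finset.mem_coe, Finset.mem_filter]
      exact ⟨Finset.mem_univ _, hcardins, by rw [hint1]; exact Finset.card_singleton x, hint2⟩
    · rintro ⟨x, A⟩ hq ⟨x', A'⟩ hq' heq
      have heq2 : insert x A = insert x' A' := heq
      rw [Finset.mem_coe, hDdef, Finset.mem_product] at hq hq'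
      obtain ⟨hx, hA⟩ := hq
      obtain ⟨hx', hA'⟩ := hq'
      rw [Finset.mem_powersetCard] at hA hA'
      have hAU : ∀ y ∈ A, y ∉ U := by
        intro y hy
        have := hA.1 hy
        rw [hRdef, Finset.mem_sdiff] at this
        exact this.2
      have hA'U : ∀ y ∈ A', y ∉ U := by
        intro y hy
        have := hA'.1 hy
        rw [hRdef, Finset.mem_sdiff] at this
        exact this.2
      have hxA : x ∉ A := fun h => hAU x h (hsubi hx)
      have hx'A' : x' ∉ A' := fun h => hA'U x' h (hsubi hx')
      have hxx' : x = x' := by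
        have hxmem : x ∈ insert x' A' := heq2 ▸ Finset.mem_insert_self x A
        rcases Finset.mem_insert.mp hxmem with h | h
        · exact h
        · exact absurd (hsubi hx) (hA'U x h)
      have hAA' : A = A' := by
        have h2 : (insert x A).erase x = (insert x' A').erase x := by rw [heq2]
        rw [Finset.erase_insert hxA, hxx', Finset.erase_insert hx'A'] at h2
        exact h2
      simp [hxx', hAA']
  -- connect subtype count to plain count
  set Ω := {T : Finset (Fin n) // T.card = m} with hΩdef
  set P : Ω → Prop := fun T => ((T : Finset (Fin n)) ∩ S i).card = 1 ∧
      (T : Finset (Fin n)) ∩ S (i + 1) = ∅ with hPdef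
  have hGG : (Finset.univ.filter (fun T : Ω => P T)).card = G2.card := by
    apply Finset.card_bij (fun (T : Ω) _ => (T : Finset (Fin n)))
    · intro T hT
      rw [Finset.mem_filter] at hT
      rw [hG2def, Finset.mem_filter]
      exact ⟨Finset.mem_univ _, T.2, hT.2⟩
    · intro T₁ _ T₂ _ h
      exact Subtype.ext h
    · intro T hT
      rw [hG2def, Finset.mem_filter] at hT
      exact ⟨⟨T, hT.2.1⟩, by rw [Finset.mem_filter]; exact ⟨Finset.mem_univ _, hT.2.2⟩, rfl⟩
  -- counting
  have hNcard : Fintype.card Ω = n.choose m := by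
    exact (Fintype.card_finset_len (α := Fin n) m).trans (by rw [Fintype.card_fin])
  set N : ℕ := n.choose m with hNdef
  set Gc : ℕ := (Finset.univ.filter (fun T : Ω => P T)).card with hGcdef
  set Bc : ℕ := (Finset.univ.filter (fun T : Ω => ¬ P T)).card with hBcdef
  have hGB : Gc + Bc = N := by
    rw [hGcdef, hBcdef, Finset.card_filter_add_card_filter_not, Finset.card_univ,
      hNcard]
  -- tuple counts
  have htot : (Finset.univ : Finset (Fin t → Ω)).card = N ^ t := by
    rw [Finset.card_univ, Fintype.card_fun, Fintype.card_fin, hNcard]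
  have hsplit : (Finset.univ.filter
        (fun f : Fin t → Ω => ∃ j : Fin t, P (f j))).card +
      (Finset.univ.filter (fun f : Fin t → Ω => ¬ ∃ j : Fin t, P (f j))).card = N ^ t := by
    rw [Finset.card_filter_add_card_filter_not, htot]
  have hneg : (Finset.univ.filter
      (fun f : Fin t → Ω => ¬ ∃ j : Fin t, P (f j))).card = Bc ^ t := by
    have hcongr : (Finset.univ.filter (fun f : Fin t → Ω => ¬ ∃ j : Fin t, P (f j))) =
        (Finset.univ.filter (fun f : Fin t → Ω => ∀ j : Fin t, ¬ P (f j))) := by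
      ext f
      simp
    rw [hcongr, hBcdef]
    exact stmt14_tuples t (fun T : Ω => ¬ P T)
  -- rewrite the goal filter to use P
  have hfilter_eq : (Finset.univ.filter
        (fun f : Fin t → Ω =>
          ∃ j : Fin t, ((f j : Finset (Fin n)) ∩ S i).card = 1 ∧
            (f j : Finset (Fin n)) ∩ S (i + 1) = ∅)) =
      (Finset.univ.filter (fun f : Fin t → Ω => ∃ j : Fin t, P (f j))) := by
    ext f
    simp [hPdef]
  rw [hfilter_eq, htot]
  have h1 := hsplit
  rw [hneg] at h1
  have hcardE : ((Finset.univ.filter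
      (fun f : Fin t → Ω => ∃ j : Fin t, P (f j))).card : ℝ) = (N:ℝ)^t - (Bc:ℝ)^t := by
    have h2 := congrArg (Nat.cast (R := ℝ)) h1
    push_cast at h2
    linarith
  rw [hcardE]
  -- now pure real analysis
  have hNpos : 0 < N := Nat.choose_pos (Nat.div_le_self n σ)
  have hNR : (0:ℝ) < (N:ℝ) := Nat.cast_pos.mpr hNpos
  have hGcN : Gc ≤ N := Nat.le.intro hGB
  have hBcR : (Bc:ℝ) = (N:ℝ) - (Gc:ℝ) := by
    have h3 : (Gc:ℝ) + (Bc:ℝ) = (N:ℝ) := by exact_mod_cast congrArg (Nat.cast (R := ℝ)) hGB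
    linarith
  have hNtpos : (0:ℝ) < (N:ℝ)^t := pow_pos hNR t
  have hcast : ((N^t : ℕ) : ℝ) = ((N:ℝ))^t := by push_cast; ring
  rw [hcast, sub_div, div_self (ne_of_gt hNtpos), ← div_pow]
  have hp0 : (0:ℝ) ≤ (Gc:ℝ)/(N:ℝ) := div_nonneg (Nat.cast_nonneg _) hNR.le
  have hp1 : (Gc:ℝ)/(N:ℝ) ≤ 1 := by
    rw [div_le_one hNR]; exact_mod_cast hGcN
  have hfrac : (Bc:ℝ)/(N:ℝ) = 1 - (Gc:ℝ)/(N:ℝ) := by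
    rw [hBcR]; field_simp
  set p : ℝ := (Gc:ℝ)/(N:ℝ) with hpdef
  suffices hfin : ((Bc:ℝ)/(N:ℝ))^t ≤ ε by linarith
  rw [hfrac]
  -- bounds on p
  have hsiR : (0:ℝ) < (s i : ℝ) := by exact_mod_cast hs i
  have hσR : (0:ℝ) < (σ : ℝ) := by positivity
  have heσ : (0:ℝ) < Real.exp 1 * (σ:ℝ) := by positivity
  have hplow : (s i : ℝ)/(Real.exp 1 * (σ:ℝ)) ≤ p := by
    rw [hpdef, div_le_div_iff₀ heσ hNR]
    have hC' : (0:ℝ) ≤ ((n - σ).choose (m-1):ℝ) := Nat.cast_nonneg _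
    have hGlow : (s i : ℝ) * ((n-σ).choose (m-1):ℝ) ≤ (Gc:ℝ) := by
      have h4 : s i * (n-σ).choose (m-1) ≤ Gc :=
        calc s i * (n-σ).choose (m-1) = D.card := hD.symm
          _ ≤ G2.card := hinj
          _ = Gc := hGG.symm
      exact_mod_cast h4
    have hNup : (N:ℝ) ≤ Real.exp 1 * (σ:ℝ) * ((n-σ).choose (m-1):ℝ) :=
      stmt14_choose_bound σ m n hσ2 hm2 hnσ
    nlinarith [mul_le_mul_of_nonneg_left hNup hsiR.le,
      mul_le_mul_of_nonneg_left hGlow heσ.le]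
  -- exponential bounds
  have hexp1 : (1 - p)^t ≤ Real.exp ((t:ℝ) * (-p)) := by
    rw [Real.exp_nat_mul]
    exact pow_le_pow_left₀ (by linarith)
      (by have := Real.add_one_le_exp (-p); linarith) t
  set L : ℝ := Real.log (1/ε) with hLdef
  have hL0 : 0 ≤ L := Real.log_nonneg (one_le_one_div hε0 hε1.le)
  have hCe : 4*Real.pi^2*Real.exp 1 ≤ Real.exp 5 := by
    have h5 : Real.exp 5 = Real.exp 1^5 := by
      rw [← Real.exp_nat_mul]; norm_num
    have he9 := Real.exp_one_gt_d9
    have hπ := Real.pi_lt_d2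
    have hπ0 := Real.pi_pos
    have hq1 : Real.pi^2 < 3.15^2 := by nlinarith
    have hq2 : (2.7182818283:ℝ)^4 ≤ (Real.exp 1)^4 :=
      pow_le_pow_left₀ (by norm_num) he9.le 4
    have hq3 : (Real.exp 1)^5 = (Real.exp 1)^4 * Real.exp 1 := by ring
    rw [h5]
    nlinarith [Real.exp_pos 1]
  have hLp : L ≤ (t:ℝ) * p := by
    have step1 : (Real.exp 5/(4*Real.pi^2) * L * ((σ:ℝ)/(s i:ℝ))) *
        ((s i:ℝ)/(Real.exp 1 * (σ:ℝ))) ≤ (t:ℝ) * p := by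
      apply mul_le_mul ht hplow (by positivity) (Nat.cast_nonneg t)
    have heq' : (Real.exp 5/(4*Real.pi^2) * L * ((σ:ℝ)/(s i:ℝ))) *
        ((s i:ℝ)/(Real.exp 1 * (σ:ℝ))) = Real.exp 5/(4*Real.pi^2*Real.exp 1) * L := by
      field_simp
    rw [heq'] at step1
    have hone : (1:ℝ) ≤ Real.exp 5/(4*Real.pi^2*Real.exp 1) := by
      rw [le_div_iff₀ (by positivity)]
      linarith
    nlinarith
  calc (1 - p)^t ≤ Real.exp ((t:ℝ) * (-p)) := hexp1
    _ ≤ Real.exp (-L) := by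
        apply Real.exp_le_exp.mpr
        nlinarith
    _ = ε := by
        rw [hLdef, one_div, Real.log_inv, neg_neg, Real.exp_log hε0]
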